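/- The third pedal triangle is similar to the original triangle via a spiral similarity centered at the pedal point: let (A,B,C) be a triangle in ℂ and M a point; define the pedal operation sending a triangle (X,Y,Z) to (foot of the perpendicular from M to line XY, foot from M to line YZ, foot from M to line ZX). Suppose the original triangle and its first and second pedal triangles with respect to M each have non-collinear (in particular pairwise distinct) vertices. Then the third pedal triangle (A₃,B₃,C₃) of (A,B,C) with respect to M satisfies: there exists σ ∈ ℂ, σ ≠ 0, with A₃ − M = σ*(A − M), B₃ − M = σ*(B − M), C₃ − M = σ*(C − M). -/

import Mathlib

open Complex EuclideanGeometry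

/-- The pedal operation with respect to `M`: a triangle `(X,Y,Z)` is sent to the
triangle of feet of the perpendiculars from `M` to the lines `XY`, `YZ`, `ZX`. -/
noncomputable def pedal (M : ℂ) (T : ℂ × ℂ × ℂ) : ℂ × ℂ × ℂ :=
  ((EuclideanGeometry.orthogonalProjection (affineSpan ℝ {T.1, T.2.1}) M : ℂ),
   (EuclideanGeometry.orthogonalProjection (affineSpan ℝ {T.2.1, T.2.2}) M : ℂ),
   (EuclideanGeometry.orthogonalProjection (affineSpan ℝ {T.2.2, T.1}) M : ℂ))

namespace ThirdPedalAux

local notation "conj'" => (starRingEnd ℂ)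

noncomputable def pfoot (x y : ℂ) : ℂ :=
  (x * conj' y - conj' x * y) / (2 * (conj' y - conj' x))

lemma pfoot_eq (x y : ℂ) :
    pfoot x y = (x * conj' y - conj' x * y) / (2 * (conj' y - conj' x)) := rfl

lemma foot_spec (M X Y : ℂ) (h : X ≠ Y) :
    (EuclideanGeometry.orthogonalProjection (affineSpan ℝ {X, Y}) M : ℂ)
      = M + pfoot (X - M) (Y - M) := by
  have hYX : Y - X ≠ 0 := sub_ne_zero.mpr h.symm
  have hd : conj' Y - conj' X ≠ 0 :=
    sub_ne_zero.mpr (fun hc => h.symm ((starRingEnd ℂ).injective hc))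
  set t : ℝ := ((M - X) * conj' (Y - X)).re / Complex.normSq (Y - X) with htdef
  have hns : (Complex.normSq (Y - X) : ℝ) ≠ 0 := by
    simpa [Complex.normSq_eq_zero] using hYX
  have h1 : ((((M - X) * conj' (Y - X)).re : ℝ) : ℂ)
      = ((M - X) * conj' (Y - X) + conj' ((M - X) * conj' (Y - X))) / 2 := by
    rw [Complex.add_conj]; push_cast; ring
  have h2 : ((Complex.normSq (Y - X) : ℝ) : ℂ) = (Y - X) * conj' (Y - X) := by
    rw [Complex.mul_conj]
  have hns' : ((Complex.normSq (Y - X) : ℝ) : ℂ) ≠ 0 := by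
    exact_mod_cast hns
  have ht : (t : ℂ) = ((M - X) * (conj' Y - conj' X) + (conj' M - conj' X) * (Y - X)) /
      (2 * ((Y - X) * (conj' Y - conj' X))) := by
    rw [htdef]; push_cast
    rw [h1]
    rw [div_eq_div_iff hns' (by
      intro hc
      rcases mul_eq_zero.mp hc with h' | h'
      · norm_num at h'
      · exact (mul_ne_zero hYX hd) h')]
    rw [h2]
    simp only [map_mul, map_sub, Complex.conj_conj]
    ring
  have hmem : M + pfoot (X - M) (Y - M) ∈ affineSpan ℝ ({X, Y} : Set ℂ) := by
    have hline := AffineMap.lineMap_mem_affineSpan_pair (k := ℝ) t X Y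
    have heq : AffineMap.lineMap X Y t = M + pfoot (X - M) (Y - M) := by
      rw [AffineMap.lineMap_apply]
      simp only [vsub_eq_sub, vadd_eq_add, Complex.real_smul, ht, pfoot]
      simp only [map_sub]
      have hd2 : conj' Y - conj' M - (conj' X - conj' M) ≠ 0 := by rwa [sub_sub_sub_cancel_right]
      field_simp
      ring
    rwa [heq] at hline
  set q : ℂ := M + pfoot (X - M) (Y - M) with hqdef
  have horth : q -ᵥ M ∈ (affineSpan ℝ ({X, Y} : Set ℂ)).directionᗮ := by
    rw [direction_affineSpan, vectorSpan_pair]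
    rw [Submodule.mem_orthogonal]
    intro u hu
    obtain ⟨r, rfl⟩ := Submodule.mem_span_singleton.mp hu
    rw [real_inner_smul_left]
    have hqM : q -ᵥ M = pfoot (X - M) (Y - M) := by
      simp [hqdef, vsub_eq_sub]
    rw [hqM]
    have key : conj' (X -ᵥ Y) * pfoot (X - M) (Y - M)
        = ((-(1:ℝ)/2 : ℝ) : ℂ) * ((X - M) * conj' (Y - M) - conj' (X - M) * (Y - M)) := by
      simp only [vsub_eq_sub, pfoot, map_sub]
      have hd2 : conj' Y - conj' M - (conj' X - conj' M) ≠ 0 := by rwa [sub_sub_sub_cancel_right]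
      field_simp
      push_cast
      ring
    have hre : (((X - M) * conj' (Y - M) - conj' (X - M) * (Y - M))).re = 0 := by
      set w := (X - M) * conj' (Y - M) - conj' (X - M) * (Y - M) with hw
      have hcw : conj' w = -w := by
        simp only [hw, map_sub, map_mul, Complex.conj_conj]; ring
      have hre' := congrArg Complex.re hcw
      simp only [Complex.conj_re, Complex.neg_re] at hre'
      linarith
    rw [Complex.inner, mul_comm (pfoot _ _), key, Complex.re_ofReal_mul, hre]
    ring
  have hmk : q ∈ AffineSubspace.mk' M (affineSpan ℝ ({X, Y} : Set ℂ)).directionᗮ := by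
    rw [← AffineSubspace.vsub_right_mem_direction_iff_mem
      (AffineSubspace.self_mem_mk' M _) q, AffineSubspace.direction_mk']
    exact horth
  have hsing := EuclideanGeometry.inter_eq_singleton_orthogonalProjection
    (s := affineSpan ℝ ({X, Y} : Set ℂ)) M
  have hq : q ∈ ({(EuclideanGeometry.orthogonalProjection
      (affineSpan ℝ ({X, Y} : Set ℂ)) M : ℂ)} : Set ℂ) := by
    rw [← hsing]; exact ⟨hmem, hmk⟩
  exact (Set.mem_singleton_iff.mp hq).symm

lemma pedal_eq (M X Y Z : ℂ) (hXY : X ≠ Y) (hYZ : Y ≠ Z) (hZX : Z ≠ X) :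
    pedal M (X, Y, Z) = (M + pfoot (X - M) (Y - M), M + pfoot (Y - M) (Z - M),
      M + pfoot (Z - M) (X - M)) := by
  unfold pedal
  dsimp only
  rw [foot_spec M X Y hXY, foot_spec M Y Z hYZ, foot_spec M Z X hZX]

lemma pedal_eq' (M x y z : ℂ) (hxy : x ≠ y) (hyz : y ≠ z) (hzx : z ≠ x) :
    pedal M (M + x, M + y, M + z) = (M + pfoot x y, M + pfoot y z, M + pfoot z x) := by
  have h1 : M + x ≠ M + y := fun h => hxy (add_left_cancel h)
  have h2 : M + y ≠ M + z := fun h => hyz (add_left_cancel h)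
  have h3 : M + z ≠ M + x := fun h => hzx (add_left_cancel h)
  rw [pedal_eq M _ _ _ h1 h2 h3]
  simp only [add_sub_cancel_left]

lemma ne3 {x y z : ℂ} (h : AffineIndependent ℝ ![x, y, z]) :
    x ≠ y ∧ y ≠ z ∧ z ≠ x := by
  have hinj := h.injective
  refine ⟨fun he => ?_, fun he => ?_, fun he => ?_⟩
  · exact (by decide : (0 : Fin 3) ≠ 1) (hinj (by simpa using he))
  · exact (by decide : (1 : Fin 3) ≠ 2) (hinj (by simpa using he))
  · exact (by decide : (2 : Fin 3) ≠ 0) (hinj (by simpa using he))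

lemma pfoot_mul (x y : ℂ) (h : conj' y - conj' x ≠ 0) :
    pfoot x y * (2 * (conj' y - conj' x)) = x * conj' y - conj' x * y := by
  rw [pfoot_eq, div_mul_cancel₀ _ (mul_ne_zero two_ne_zero h)]

set_option maxHeartbeats 1600000 in
theorem key_alg (a b c : ℂ)
    (h0ab : a ≠ b) (h0bc : b ≠ c) (h0ca : c ≠ a)
    (h1ab : pfoot a b ≠ pfoot b c) (h1bc : pfoot b c ≠ pfoot c a)
    (h1ca : pfoot c a ≠ pfoot a b)
    (h2ab : pfoot (pfoot a b) (pfoot b c) ≠ pfoot (pfoot b c) (pfoot c a))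
    (h2bc : pfoot (pfoot b c) (pfoot c a) ≠ pfoot (pfoot c a) (pfoot a b))
    (h2ca : pfoot (pfoot c a) (pfoot a b) ≠ pfoot (pfoot a b) (pfoot b c)) :
    ∃ σ : ℂ, σ ≠ 0 ∧
      pfoot (pfoot (pfoot a b) (pfoot b c)) (pfoot (pfoot b c) (pfoot c a)) = σ * a ∧
      pfoot (pfoot (pfoot b c) (pfoot c a)) (pfoot (pfoot c a) (pfoot a b)) = σ * b ∧
      pfoot (pfoot (pfoot c a) (pfoot a b)) (pfoot (pfoot a b) (pfoot b c)) = σ * c := by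
  have hdAB : b - a ≠ 0 := sub_ne_zero.mpr h0ab.symm
  have hdAB' : conj' b - conj' a ≠ 0 :=
    sub_ne_zero.mpr (fun h => h0ab.symm ((starRingEnd ℂ).injective h))
  have hdBC : c - b ≠ 0 := sub_ne_zero.mpr h0bc.symm
  have hdBC' : conj' c - conj' b ≠ 0 :=
    sub_ne_zero.mpr (fun h => h0bc.symm ((starRingEnd ℂ).injective h))
  have hdCA : a - c ≠ 0 := sub_ne_zero.mpr h0ca.symm
  have hdCA' : conj' a - conj' c ≠ 0 :=
    sub_ne_zero.mpr (fun h => h0ca.symm ((starRingEnd ℂ).injective h))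
  have P1a := pfoot_mul a b hdAB'
  have Q1a : conj' (pfoot a b) * (2 * (b - a)) = -(a * conj' b - conj' a * b) := by
    have h := congrArg conj' P1a
    simp only [map_mul, map_sub, map_ofNat, Complex.conj_conj] at h
    linear_combination h
  have P1b := pfoot_mul b c hdBC'
  have Q1b : conj' (pfoot b c) * (2 * (c - b)) = -(b * conj' c - conj' b * c) := by
    have h := congrArg conj' P1b
    simp only [map_mul, map_sub, map_ofNat, Complex.conj_conj] at h
    linear_combination h
  have P1c := pfoot_mul c a hdCA'
  have Q1c : conj' (pfoot c a) * (2 * (a - c)) = -(c * conj' a - conj' c * a) := by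
    have h := congrArg conj' P1c
    simp only [map_mul, map_sub, map_ofNat, Complex.conj_conj] at h
    linear_combination h
  have h1ab2 : conj' (pfoot b c) - conj' (pfoot a b) ≠ 0 :=
    sub_ne_zero.mpr (fun h => h1ab ((starRingEnd ℂ).injective h).symm)
  have h1bc2 : conj' (pfoot c a) - conj' (pfoot b c) ≠ 0 :=
    sub_ne_zero.mpr (fun h => h1bc ((starRingEnd ℂ).injective h).symm)
  have h1ca2 : conj' (pfoot a b) - conj' (pfoot c a) ≠ 0 :=
    sub_ne_zero.mpr (fun h => h1ca ((starRingEnd ℂ).injective h).symm)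
  have K2ab : (conj' (pfoot b c) - conj' (pfoot a b)) * (2 * ((b - a) * (c - b)))
      = -(b * ((a * conj' b - conj' a * b) + (b * conj' c - conj' b * c) + (c * conj' a - conj' c * a))) := by
    linear_combination (b - a) * Q1b - (c - b) * Q1a
  have K2bc : (conj' (pfoot c a) - conj' (pfoot b c)) * (2 * ((c - b) * (a - c)))
      = -(c * ((a * conj' b - conj' a * b) + (b * conj' c - conj' b * c) + (c * conj' a - conj' c * a))) := by
    linear_combination (c - b) * Q1c - (a - c) * Q1b
  have K2ca : (conj' (pfoot a b) - conj' (pfoot c a)) * (2 * ((a - c) * (b - a)))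
      = -(a * ((a * conj' b - conj' a * b) + (b * conj' c - conj' b * c) + (c * conj' a - conj' c * a))) := by
    linear_combination (a - c) * Q1a - (b - a) * Q1c
  have hbS : b * ((a * conj' b - conj' a * b) + (b * conj' c - conj' b * c) + (c * conj' a - conj' c * a)) ≠ 0 := by
    intro h
    exact (mul_ne_zero h1ab2 (mul_ne_zero two_ne_zero (mul_ne_zero hdAB hdBC))) (K2ab.trans (by rw [h, neg_zero]))
  have hcS : c * ((a * conj' b - conj' a * b) + (b * conj' c - conj' b * c) + (c * conj' a - conj' c * a)) ≠ 0 := by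
    intro h
    exact (mul_ne_zero h1bc2 (mul_ne_zero two_ne_zero (mul_ne_zero hdBC hdCA))) (K2bc.trans (by rw [h, neg_zero]))
  have haS : a * ((a * conj' b - conj' a * b) + (b * conj' c - conj' b * c) + (c * conj' a - conj' c * a)) ≠ 0 := by
    intro h
    exact (mul_ne_zero h1ca2 (mul_ne_zero two_ne_zero (mul_ne_zero hdCA hdAB))) (K2ca.trans (by rw [h, neg_zero]))
  have ha0 : a ≠ 0 := left_ne_zero_of_mul haS
  have hb0 : b ≠ 0 := left_ne_zero_of_mul hbS
  have hc0 : c ≠ 0 := left_ne_zero_of_mul hcS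
  have hS : ((a * conj' b - conj' a * b) + (b * conj' c - conj' b * c) + (c * conj' a - conj' c * a)) ≠ 0 := right_ne_zero_of_mul haS
  have ha0' : conj' a ≠ 0 := fun h => ha0 (by simpa using ((starRingEnd ℂ).injective (h.trans (map_zero (starRingEnd ℂ)).symm)))
  have hb0' : conj' b ≠ 0 := fun h => hb0 (by simpa using ((starRingEnd ℂ).injective (h.trans (map_zero (starRingEnd ℂ)).symm)))
  have hc0' : conj' c ≠ 0 := fun h => hc0 (by simpa using ((starRingEnd ℂ).injective (h.trans (map_zero (starRingEnd ℂ)).symm)))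
  have P2a := pfoot_mul (pfoot a b) (pfoot b c) h1ab2
  have W2a : pfoot (pfoot a b) (pfoot b c) * (4 * (b * ((conj' b - conj' a) * (conj' c - conj' b)))) = (a * conj' b - conj' a * b) * (b * conj' c - conj' b * c) := by
    apply mul_right_cancel₀ hS
    have M1 := congrArg₂ (· * ·) P1a Q1b
    have M2 := congrArg₂ (· * ·) Q1a P1b
    linear_combination (-(4 * (b - a) * (conj' b - conj' a) * (c - b) * (conj' c - conj' b))) * P2a + (4 * pfoot (pfoot a b) (pfoot b c) * (conj' b - conj' a) * (conj' c - conj' b)) * K2ab - ((b - a) * (conj' c - conj' b)) * M1 + ((conj' b - conj' a) * (c - b)) * M2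
  have W2a' : conj' (pfoot (pfoot a b) (pfoot b c)) * (4 * (conj' b * ((b - a) * (c - b)))) = (a * conj' b - conj' a * b) * (b * conj' c - conj' b * c) := by
    have h := congrArg conj' W2a
    simp only [map_mul, map_sub, map_add, map_ofNat, Complex.conj_conj] at h
    linear_combination h
  have P2b := pfoot_mul (pfoot b c) (pfoot c a) h1bc2
  have W2b : pfoot (pfoot b c) (pfoot c a) * (4 * (c * ((conj' c - conj' b) * (conj' a - conj' c)))) = (b * conj' c - conj' b * c) * (c * conj' a - conj' c * a) := by
    apply mul_right_cancel₀ hS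
    have M1 := congrArg₂ (· * ·) P1b Q1c
    have M2 := congrArg₂ (· * ·) Q1b P1c
    linear_combination (-(4 * (c - b) * (conj' c - conj' b) * (a - c) * (conj' a - conj' c))) * P2b + (4 * pfoot (pfoot b c) (pfoot c a) * (conj' c - conj' b) * (conj' a - conj' c)) * K2bc - ((c - b) * (conj' a - conj' c)) * M1 + ((conj' c - conj' b) * (a - c)) * M2
  have W2b' : conj' (pfoot (pfoot b c) (pfoot c a)) * (4 * (conj' c * ((c - b) * (a - c)))) = (b * conj' c - conj' b * c) * (c * conj' a - conj' c * a) := by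
    have h := congrArg conj' W2b
    simp only [map_mul, map_sub, map_add, map_ofNat, Complex.conj_conj] at h
    linear_combination h
  have P2c := pfoot_mul (pfoot c a) (pfoot a b) h1ca2
  have W2c : pfoot (pfoot c a) (pfoot a b) * (4 * (a * ((conj' a - conj' c) * (conj' b - conj' a)))) = (c * conj' a - conj' c * a) * (a * conj' b - conj' a * b) := by
    apply mul_right_cancel₀ hS
    have M1 := congrArg₂ (· * ·) P1c Q1a
    have M2 := congrArg₂ (· * ·) Q1c P1a
    linear_combination (-(4 * (a - c) * (conj' a - conj' c) * (b - a) * (conj' b - conj' a))) * P2c + (4 * pfoot (pfoot c a) (pfoot a b) * (conj' a - conj' c) * (conj' b - conj' a)) * K2ca - ((a - c) * (conj' b - conj' a)) * M1 + ((conj' a - conj' c) * (b - a)) * M2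
  have W2c' : conj' (pfoot (pfoot c a) (pfoot a b)) * (4 * (conj' a * ((a - c) * (b - a)))) = (c * conj' a - conj' c * a) * (a * conj' b - conj' a * b) := by
    have h := congrArg conj' W2c
    simp only [map_mul, map_sub, map_add, map_ofNat, Complex.conj_conj] at h
    linear_combination h
  have h2ab2 : conj' (pfoot (pfoot b c) (pfoot c a)) - conj' (pfoot (pfoot a b) (pfoot b c)) ≠ 0 :=
    sub_ne_zero.mpr (fun h => h2ab ((starRingEnd ℂ).injective h).symm)
  have h2bc2 : conj' (pfoot (pfoot c a) (pfoot a b)) - conj' (pfoot (pfoot b c) (pfoot c a)) ≠ 0 :=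
    sub_ne_zero.mpr (fun h => h2bc ((starRingEnd ℂ).injective h).symm)
  have h2ca2 : conj' (pfoot (pfoot a b) (pfoot b c)) - conj' (pfoot (pfoot c a) (pfoot a b)) ≠ 0 :=
    sub_ne_zero.mpr (fun h => h2ca ((starRingEnd ℂ).injective h).symm)
  have K3ab : (conj' (pfoot (pfoot b c) (pfoot c a)) - conj' (pfoot (pfoot a b) (pfoot b c))) * (4 * (conj' b * (conj' c * ((b - a) * ((c - b) * (a - c))))))
      = (b * conj' c - conj' b * c) * (a * conj' a * (b * conj' c - conj' b * c) + b * conj' b * (c * conj' a - conj' c * a) + c * conj' c * (a * conj' b - conj' a * b)) := by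
    linear_combination (conj' b * (b - a)) * W2b' - (conj' c * (a - c)) * W2a'
  have K3bc : (conj' (pfoot (pfoot c a) (pfoot a b)) - conj' (pfoot (pfoot b c) (pfoot c a))) * (4 * (conj' c * (conj' a * ((c - b) * ((a - c) * (b - a))))))
      = (c * conj' a - conj' c * a) * (a * conj' a * (b * conj' c - conj' b * c) + b * conj' b * (c * conj' a - conj' c * a) + c * conj' c * (a * conj' b - conj' a * b)) := by
    linear_combination (conj' c * (c - b)) * W2c' - (conj' a * (b - a)) * W2b'
  have K3ca : (conj' (pfoot (pfoot a b) (pfoot b c)) - conj' (pfoot (pfoot c a) (pfoot a b))) * (4 * (conj' a * (conj' b * ((a - c) * ((b - a) * (c - b))))))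
      = (a * conj' b - conj' a * b) * (a * conj' a * (b * conj' c - conj' b * c) + b * conj' b * (c * conj' a - conj' c * a) + c * conj' c * (a * conj' b - conj' a * b)) := by
    linear_combination (conj' a * (a - c)) * W2a' - (conj' b * (c - b)) * W2c'
  have hnBT : (b * conj' c - conj' b * c) * (a * conj' a * (b * conj' c - conj' b * c) + b * conj' b * (c * conj' a - conj' c * a) + c * conj' c * (a * conj' b - conj' a * b)) ≠ 0 := by
    rw [← K3ab]
    exact mul_ne_zero h2ab2 (mul_ne_zero (by norm_num : (4:ℂ) ≠ 0) (mul_ne_zero hb0' (mul_ne_zero hc0' (mul_ne_zero hdAB (mul_ne_zero hdBC hdCA)))))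
  have hnCT : (c * conj' a - conj' c * a) * (a * conj' a * (b * conj' c - conj' b * c) + b * conj' b * (c * conj' a - conj' c * a) + c * conj' c * (a * conj' b - conj' a * b)) ≠ 0 := by
    rw [← K3bc]
    exact mul_ne_zero h2bc2 (mul_ne_zero (by norm_num : (4:ℂ) ≠ 0) (mul_ne_zero hc0' (mul_ne_zero ha0' (mul_ne_zero hdBC (mul_ne_zero hdCA hdAB)))))
  have hnAT : (a * conj' b - conj' a * b) * (a * conj' a * (b * conj' c - conj' b * c) + b * conj' b * (c * conj' a - conj' c * a) + c * conj' c * (a * conj' b - conj' a * b)) ≠ 0 := by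
    rw [← K3ca]
    exact mul_ne_zero h2ca2 (mul_ne_zero (by norm_num : (4:ℂ) ≠ 0) (mul_ne_zero ha0' (mul_ne_zero hb0' (mul_ne_zero hdCA (mul_ne_zero hdAB hdBC)))))
  have hnA := left_ne_zero_of_mul hnAT
  have hnB := left_ne_zero_of_mul hnBT
  have hnC := left_ne_zero_of_mul hnCT
  have hT : (a * conj' a * (b * conj' c - conj' b * c) + b * conj' b * (c * conj' a - conj' c * a) + c * conj' c * (a * conj' b - conj' a * b)) ≠ 0 := right_ne_zero_of_mul hnAT
  have P3a := pfoot_mul (pfoot (pfoot a b) (pfoot b c)) (pfoot (pfoot b c) (pfoot c a)) h2ab2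
  have W3a : (pfoot (pfoot (pfoot a b) (pfoot b c)) (pfoot (pfoot b c) (pfoot c a))) * (8 * (a * (b * (c * ((conj' b - conj' a) * ((conj' c - conj' b) * (conj' a - conj' c))))))) = (a * conj' b - conj' a * b) * (b * conj' c - conj' b * c) * (c * conj' a - conj' c * a) * a := by
    apply mul_right_cancel₀ (mul_ne_zero hnB hT)
    have M1 := congrArg₂ (· * ·) W2a W2b'
    have M2 := congrArg₂ (· * ·) W2a' W2b
    linear_combination (16 * a * b * c * conj' b * conj' c * (b - a) * (c - b) * (a - c) * (conj' b - conj' a) * (conj' c - conj' b) * (conj' a - conj' c)) * P3a - (8 * (pfoot (pfoot (pfoot a b) (pfoot b c)) (pfoot (pfoot b c) (pfoot c a))) * a * b * c * (conj' b - conj' a) * (conj' c - conj' b) * (conj' a - conj' c)) * K3ab + (a * c * conj' b * (b - a) * (conj' a - conj' c)) * M1 - (a * b * conj' c * (conj' b - conj' a) * (a - c)) * M2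
  have P3b := pfoot_mul (pfoot (pfoot b c) (pfoot c a)) (pfoot (pfoot c a) (pfoot a b)) h2bc2
  have W3b : (pfoot (pfoot (pfoot b c) (pfoot c a)) (pfoot (pfoot c a) (pfoot a b))) * (8 * (b * (c * (a * ((conj' c - conj' b) * ((conj' a - conj' c) * (conj' b - conj' a))))))) = (b * conj' c - conj' b * c) * (c * conj' a - conj' c * a) * (a * conj' b - conj' a * b) * b := by
    apply mul_right_cancel₀ (mul_ne_zero hnC hT)
    have M1 := congrArg₂ (· * ·) W2b W2c'
    have M2 := congrArg₂ (· * ·) W2b' W2c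
    linear_combination (16 * b * c * a * conj' c * conj' a * (c - b) * (a - c) * (b - a) * (conj' c - conj' b) * (conj' a - conj' c) * (conj' b - conj' a)) * P3b - (8 * (pfoot (pfoot (pfoot b c) (pfoot c a)) (pfoot (pfoot c a) (pfoot a b))) * b * c * a * (conj' c - conj' b) * (conj' a - conj' c) * (conj' b - conj' a)) * K3bc + (b * a * conj' c * (c - b) * (conj' b - conj' a)) * M1 - (b * c * conj' a * (conj' c - conj' b) * (b - a)) * M2
  have P3c := pfoot_mul (pfoot (pfoot c a) (pfoot a b)) (pfoot (pfoot a b) (pfoot b c)) h2ca2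
  have W3c : (pfoot (pfoot (pfoot c a) (pfoot a b)) (pfoot (pfoot a b) (pfoot b c))) * (8 * (c * (a * (b * ((conj' a - conj' c) * ((conj' b - conj' a) * (conj' c - conj' b))))))) = (c * conj' a - conj' c * a) * (a * conj' b - conj' a * b) * (b * conj' c - conj' b * c) * c := by
    apply mul_right_cancel₀ (mul_ne_zero hnA hT)
    have M1 := congrArg₂ (· * ·) W2c W2a'
    have M2 := congrArg₂ (· * ·) W2c' W2a
    linear_combination (16 * c * a * b * conj' a * conj' b * (a - c) * (b - a) * (c - b) * (conj' a - conj' c) * (conj' b - conj' a) * (conj' c - conj' b)) * P3c - (8 * (pfoot (pfoot (pfoot c a) (pfoot a b)) (pfoot (pfoot a b) (pfoot b c))) * c * a * b * (conj' a - conj' c) * (conj' b - conj' a) * (conj' c - conj' b)) * K3ca + (c * b * conj' a * (a - c) * (conj' c - conj' b)) * M1 - (c * a * conj' b * (conj' a - conj' c) * (c - b)) * M2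
  have hden : (8 * (a * (b * (c * ((conj' b - conj' a) * ((conj' c - conj' b) * (conj' a - conj' c))))))) ≠ 0 := by
    exact mul_ne_zero (by norm_num) (mul_ne_zero ha0 (mul_ne_zero hb0 (mul_ne_zero hc0 (mul_ne_zero hdAB' (mul_ne_zero hdBC' hdCA')))))
  refine ⟨(a * conj' b - conj' a * b) * (b * conj' c - conj' b * c) * (c * conj' a - conj' c * a) / (8 * (a * (b * (c * ((conj' b - conj' a) * ((conj' c - conj' b) * (conj' a - conj' c))))))), ?_, ?_, ?_, ?_⟩
  · exact div_ne_zero (mul_ne_zero (mul_ne_zero hnA hnB) hnC) hden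
  · rw [div_mul_eq_mul_div, eq_div_iff hden]
    linear_combination W3a
  · rw [div_mul_eq_mul_div, eq_div_iff hden]
    linear_combination W3b
  · rw [div_mul_eq_mul_div, eq_div_iff hden]
    linear_combination W3c

end ThirdPedalAux

open ThirdPedalAux in
/-- The third pedal triangle of a triangle `(A,B,C)` with respect to `M` is the image
of `(A,B,C)` under a spiral similarity centered at `M`, provided the original triangle
and its first and second pedal triangles are non-degenerate. -/
theorem third_pedal_triangle_similar
    (A B C M : ℂ)
    (hdef : ∀ k < 3,
      AffineIndependent ℝ
        ![((pedal M)^[k] (A, B, C)).1, ((pedal M)^[k] (A, B, C)).2.1,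
          ((pedal M)^[k] (A, B, C)).2.2]) :
    ∃ σ : ℂ, σ ≠ 0 ∧
      ((pedal M)^[3] (A, B, C)).1 - M = σ * (A - M) ∧
      ((pedal M)^[3] (A, B, C)).2.1 - M = σ * (B - M) ∧
      ((pedal M)^[3] (A, B, C)).2.2 - M = σ * (C - M) := by
  have h0 := hdef 0 (by norm_num)
  have h1 := hdef 1 (by norm_num)
  have h2 := hdef 2 (by norm_num)
  simp only [Function.iterate_zero, id_eq] at h0
  obtain ⟨hAB, hBC, hCA⟩ := ne3 h0
  have e1 : (pedal M)^[1] (A, B, C)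
      = (M + pfoot (A - M) (B - M), M + pfoot (B - M) (C - M), M + pfoot (C - M) (A - M)) := by
    rw [Function.iterate_one]; exact pedal_eq M A B C hAB hBC hCA
  rw [e1] at h1
  obtain ⟨h1ab, h1bc, h1ca⟩ := ne3 h1
  have h1ab' : pfoot (A - M) (B - M) ≠ pfoot (B - M) (C - M) :=
    fun h => h1ab (by rw [h])
  have h1bc' : pfoot (B - M) (C - M) ≠ pfoot (C - M) (A - M) :=
    fun h => h1bc (by rw [h])
  have h1ca' : pfoot (C - M) (A - M) ≠ pfoot (A - M) (B - M) :=
    fun h => h1ca (by rw [h])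
  have e2 : (pedal M)^[2] (A, B, C)
      = (M + pfoot (pfoot (A - M) (B - M)) (pfoot (B - M) (C - M)),
         M + pfoot (pfoot (B - M) (C - M)) (pfoot (C - M) (A - M)),
         M + pfoot (pfoot (C - M) (A - M)) (pfoot (A - M) (B - M))) := by
    rw [show (2 : ℕ) = 1 + 1 from rfl, Function.iterate_add_apply, e1, Function.iterate_one]
    exact pedal_eq' M _ _ _ h1ab' h1bc' h1ca'
  rw [e2] at h2
  obtain ⟨h2ab, h2bc, h2ca⟩ := ne3 h2
  have h2ab' : pfoot (pfoot (A - M) (B - M)) (pfoot (B - M) (C - M))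
      ≠ pfoot (pfoot (B - M) (C - M)) (pfoot (C - M) (A - M)) := fun h => h2ab (by rw [h])
  have h2bc' : pfoot (pfoot (B - M) (C - M)) (pfoot (C - M) (A - M))
      ≠ pfoot (pfoot (C - M) (A - M)) (pfoot (A - M) (B - M)) := fun h => h2bc (by rw [h])
  have h2ca' : pfoot (pfoot (C - M) (A - M)) (pfoot (A - M) (B - M))
      ≠ pfoot (pfoot (A - M) (B - M)) (pfoot (B - M) (C - M)) := fun h => h2ca (by rw [h])
  have e3 : (pedal M)^[3] (A, B, C)
      = (M + pfoot (pfoot (pfoot (A - M) (B - M)) (pfoot (B - M) (C - M)))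
               (pfoot (pfoot (B - M) (C - M)) (pfoot (C - M) (A - M))),
         M + pfoot (pfoot (pfoot (B - M) (C - M)) (pfoot (C - M) (A - M)))
               (pfoot (pfoot (C - M) (A - M)) (pfoot (A - M) (B - M))),
         M + pfoot (pfoot (pfoot (C - M) (A - M)) (pfoot (A - M) (B - M)))
               (pfoot (pfoot (A - M) (B - M)) (pfoot (B - M) (C - M)))) := by
    rw [show (3 : ℕ) = 1 + 2 from rfl, Function.iterate_add_apply, e2, Function.iterate_one]
    exact pedal_eq' M _ _ _ h2ab' h2bc' h2ca'
  have hABM : A - M ≠ B - M := fun h => hAB (by linear_combination h)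
  have hBCM : B - M ≠ C - M := fun h => hBC (by linear_combination h)
  have hCAM : C - M ≠ A - M := fun h => hCA (by linear_combination h)
  obtain ⟨σ, hσ, hA3, hB3, hC3⟩ := key_alg (A - M) (B - M) (C - M)
    hABM hBCM hCAM h1ab' h1bc' h1ca' h2ab' h2bc' h2ca'
  refine ⟨σ, hσ, ?_, ?_, ?_⟩
  · rw [e3]; simpa using hA3
  · rw [e3]; simpa using hB3
  · rw [e3]; simpa using hC3
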